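/- Let n ≥ 1, let J be a symmetric n×n real matrix with zero diagonal, and let α, β > 0. Suppose x* ∈ ℝⁿ is a global minimizer of the Hamiltonian H(x) = (β/4)·∑ x_i⁴ − (α/2)·∑ x_i² − (1/2) xᵀ J x, and suppose there exists λ > 0 such that |x*_i| = λ for all i (i.e., x* is a vertex of the scaled hypercube {-λ, λ}ⁿ). Then the spin vector s* = sign(x*) ∈ {-1,1}ⁿ is a global minimizer of the Ising energy E(s) = −(1/2) sᵀ J s over {-1,1}ⁿ. -/
import Mathlib


open Matrix

/-- The Hamiltonian `H(x) = (β/4)·∑ xᵢ⁴ − (α/2)·∑ xᵢ² − (1/2) xᵀ J x`. -/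
noncomputable def hamiltonianH {n : ℕ} (J : Matrix (Fin n) (Fin n) ℝ) (α β : ℝ)
    (x : Fin n → ℝ) : ℝ :=
  β / 4 * ∑ i, x i ^ 4 - α / 2 * ∑ i, x i ^ 2 - 1/2 * (x ⬝ᵥ (J *ᵥ x))

/-- The homogeneous Ising energy `E(s) = −(1/2) sᵀ J s`. -/
noncomputable def isingE {n : ℕ} (J : Matrix (Fin n) (Fin n) ℝ) (s : Fin n → ℝ) : ℝ :=
  -(1/2) * (s ⬝ᵥ (J *ᵥ s))

theorem stmt_8 (n : ℕ) (hn : 1 ≤ n) (J : Matrix (Fin n) (Fin n) ℝ)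
    (hJs : J.IsSymm) (hJd : ∀ i, J i i = 0) (α β : ℝ) (hα : 0 < α) (hβ : 0 < β)
    (xstar : Fin n → ℝ)
    (hmin : ∀ x : Fin n → ℝ, hamiltonianH J α β xstar ≤ hamiltonianH J α β x)
    (hvert : ∃ lam : ℝ, 0 < lam ∧ ∀ i, |xstar i| = lam) :
    ∀ s : Fin n → ℝ, (∀ i, s i = 1 ∨ s i = -1) →
      isingE J (fun i => Real.sign (xstar i)) ≤ isingE J s := by
  obtain ⟨lam, hlam, habs⟩ := hvert
  intro s hs
  set sstar : Fin n → ℝ := fun i => Real.sign (xstar i) with hsstar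
  have hxne : ∀ i, xstar i ≠ 0 := by
    intro i h
    have := habs i
    rw [h] at this
    simp at this
    exact hlam.ne this
  have hss : ∀ i, sstar i = 1 ∨ sstar i = -1 := by
    intro i
    rcases lt_trichotomy (xstar i) 0 with h | h | h
    · right; simp [hsstar, Real.sign_of_neg h]
    · exact absurd h (hxne i)
    · left; simp [hsstar, Real.sign_of_pos h]
  have hx : ∀ i, xstar i = lam * sstar i := by
    intro i
    have hab := habs i
    rcases lt_trichotomy (xstar i) 0 with h | h | h
    · rw [abs_of_neg h] at hab
      simp [hsstar, Real.sign_of_neg h]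
      linarith
    · exact absurd h (hxne i)
    · rw [abs_of_pos h] at hab
      simp [hsstar, Real.sign_of_pos h, hab.symm]
  have hdot : ∀ y : Fin n → ℝ, (fun i => lam * y i) ⬝ᵥ (J *ᵥ (fun i => lam * y i))
      = lam ^ 2 * (y ⬝ᵥ (J *ᵥ y)) := by
    intro y
    have : (fun i => lam * y i) = lam • y := rfl
    rw [this, smul_dotProduct, mulVec_smul, dotProduct_smul, smul_eq_mul, smul_eq_mul]
    ring
  have hsum2 : ∀ (y : Fin n → ℝ), (∀ i, y i = 1 ∨ y i = -1) →
      (∑ i, (lam * y i) ^ 2 = ∑ i : Fin n, lam ^ 2) ∧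
      (∑ i, (lam * y i) ^ 4 = ∑ i : Fin n, lam ^ 4) := by
    intro y hy
    constructor <;> apply Finset.sum_congr rfl <;> intro i _ <;>
      rcases hy i with h | h <;> rw [h] <;> ring
  have key := hmin (fun i => lam * s i)
  have hxeq : xstar = fun i => lam * sstar i := funext hx
  rw [hamiltonianH, hamiltonianH, hxeq] at key
  rw [(hsum2 s hs).1, (hsum2 s hs).2, (hsum2 sstar hss).1, (hsum2 sstar hss).2,
    hdot, hdot] at key
  have hB : s ⬝ᵥ (J *ᵥ s) ≤ sstar ⬝ᵥ (J *ᵥ sstar) := by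
    have hl2 : (0:ℝ) < lam ^ 2 := by positivity
    nlinarith [key]
  rw [isingE, isingE]
  nlinarith [hB]
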